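/- Let n ≥ 3 and let j be an integer with 3 ≤ j ≤ n. Then 2^(n+1-j) divides the binomial coefficient C(2^(n-1), j). -/

import Mathlib

lemma aux_two_pow (v : ℕ) (hv : 2 ≤ v) : v + 2 ≤ 2 ^ v := by
  induction v with
  | zero => omega
  | succ k ih =>
    rcases Nat.lt_or_ge k 2 with h | h
    · interval_cases k <;> simp_all <;> omega
    · have := ih h
      have : 2 ^ k ≥ 1 := Nat.one_le_two_pow
      rw [pow_succ]; omega

theorem stmt_8 (n j : ℕ) (hn : 3 ≤ n) (hj1 : 3 ≤ j) (hj2 : j ≤ n) :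
    2 ^ (n + 1 - j) ∣ (2 ^ (n - 1)).choose j := by
  have hjle : j ≤ 2 ^ (n - 1) := by
    calc j ≤ n := hj2
    _ ≤ 2 ^ (n - 1) := by
        have := @Nat.lt_two_pow_self (n - 1)
        omega
  have hC : 0 < (2 ^ (n - 1)).choose j := Nat.choose_pos hjle
  set v := j.factorization 2 with hv
  have hvj : v + 2 ≤ j := by
    have h1 : 2 ^ v ∣ j := Nat.ordProj_dvd j 2
    have h2 : 2 ^ v ≤ j := Nat.le_of_dvd (by omega) h1
    rcases Nat.lt_or_ge v 2 with h | h
    · omega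
    · have := aux_two_pow v h
      omega
  -- key identity
  have hpos : 0 < 2 ^ (n - 1) := by positivity
  have key : 2 ^ (n - 1) * (2 ^ (n - 1) - 1).choose (j - 1)
      = (2 ^ (n - 1)).choose j * j := by
    have := Nat.add_one_mul_choose_eq (2 ^ (n - 1) - 1) (j - 1)
    have e1 : Nat.succ (2 ^ (n - 1) - 1) = 2 ^ (n - 1) := by omega
    have e2 : (j - 1) + 1 = j := by omega
    rw [Nat.succ_eq_add_one] at e1
    rw [e1, e2] at this
    exact this
  have hfact : n - 1 ≤ ((2 ^ (n - 1)).choose j).factorization 2 + v := by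
    have hdvd : 2 ^ (n - 1) ∣ (2 ^ (n - 1)).choose j * j :=
      key ▸ Dvd.intro _ rfl
    have h2 : n - 1 ≤ ((2 ^ (n - 1)).choose j * j).factorization 2 := by
      exact (Nat.Prime.pow_dvd_iff_le_factorization Nat.prime_two
        (Nat.mul_ne_zero hC.ne' (by omega))).mp hdvd
    rwa [Nat.factorization_mul hC.ne' (by omega)] at h2
  have : n + 1 - j ≤ ((2 ^ (n - 1)).choose j).factorization 2 := by omega
  exact (Nat.Prime.pow_dvd_iff_le_factorization Nat.prime_two hC.ne').mpr this
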